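/- Let S be a set of n ≥ 1 generators, B ≥ 1, and = R_B the alphabet of all reduced words of length B over S (of size 2n̂ = 2n(2n−1)^{B−1}, closed under inversion in F_S). Let λ be a real number with 1/(2n) < λ ≤ 1, and let Σ̂ be an Â-automaton with λ·2n̂-growth. Let 𝓛^red_Σ̂ be the set of words accepted by Σ̂ whose concatenation is a reduced word over S (of length B times the number of Â-letters). Then there exists c > 0 such that for all but finitely many integers L̂ > 0, setting L = B·L̂, the number of reduced words over S of length L arising from 𝓛^red_Σ̂ is at least c·((λ − 1/(2n))^{1/B}·(2n−1))^L. -/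

import Mathlib

open Filter Topology

/-- The symmetrized alphabet `S ∪ S⁻¹` for a set `S` of `n` generators. -/
abbrev Letter (n : ℕ) := Fin n × Bool

/-- The formal inverse of a letter. -/
def linv {n : ℕ} (a : Letter n) : Letter n := (a.1, !a.2)

/-- A word is reduced if no two consecutive letters are inverse to each other. -/
def Reduced {n : ℕ} (w : List (Letter n)) : Prop :=
  w.Chain' fun a b => b ≠ linv a

/-- The set of all reduced words of length `L` over `n` generators. -/
def RW (n L : ℕ) : Set (List (Letter n)) :=
  {w | w.length = L ∧ Reduced w}

/-- Inversion of words (inversion in the free group `F_S`), the involution on the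
alphabet `Â = R_B`. -/
def wInv {n : ℕ} (w : List (Letter n)) : List (Letter n) :=
  (w.map linv).reverse

/-- Running an automaton with partial transition function `δ` from a state, reading a word. -/
def run {A Q : Type} (δ : Q → A → Option Q) : Q → List A → Option Q
  | q, [] => some q
  | q, a :: w => (δ q a).bind fun q' => run δ q' w

/- ------------------- auxiliary lemmas ------------------- -/

instance finite_len_and {n m : ℕ} {P : List (Letter n) → Prop} :
    Finite {w : List (Letter n) // w.length = m ∧ P w} :=
  ((List.finite_length_eq _ m).subset fun _ hw => hw.1).to_subtype

lemma run_nil {A Q : Type} (δ : Q → A → Option Q) (q : Q) : run δ q [] = some q := rfl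

lemma run_cons {A Q : Type} (δ : Q → A → Option Q) (q : Q) (a : A) (w : List A) :
    run δ q (a :: w) = (δ q a).bind fun q' => run δ q' w := rfl

lemma eq_cons_tail {α : Type*} {w : List α} {z : α} (hh : w.head? = some z) :
    w = z :: w.tail := by
  cases w with
  | nil => simp at hh
  | cons a t =>
    simp only [List.head?_cons, Option.some.injEq] at hh
    rw [hh]
    rfl

/-- The number of reduced words of length `k+1` with prescribed first letter is at most
`(2n-1)^k`. -/
lemma card_reduced_head_le (n : ℕ) (k : ℕ) (z : Letter n) :
    Nat.card {w : List (Letter n) // w.length = k + 1 ∧ Reduced w ∧ w.head? = some z}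
      ≤ (2 * n - 1) ^ k := by
  induction k generalizing z with
  | zero =>
    have hs : Subsingleton
        {w : List (Letter n) // w.length = 1 ∧ Reduced w ∧ w.head? = some z} := by
      constructor
      rintro ⟨w, hw, _, hh⟩ ⟨w', hw', _, hh'⟩
      ext1
      match w, hw with
      | [a], _ => match w', hw' with
        | [a'], _ =>
          simp only [List.head?_cons, Option.some.injEq] at hh hh'
          subst hh; subst hh'; rfl
    have h1 := Nat.card_le_card_of_injective
      (fun _ : {w : List (Letter n) // w.length = 1 ∧ Reduced w ∧ w.head? = some z} =>
        (() : Unit))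
      (fun a b _ => Subsingleton.elim a b)
    simpa using h1
  | succ k ih =>
    classical
    have htl : ∀ w : List (Letter n), w.length = k + 1 + 1 → w.tail ≠ [] := by
      intro w hl h
      have := congrArg List.length h
      simp [List.length_tail, hl] at this
    set T := fun y : Letter n =>
      {w : List (Letter n) // w.length = k + 1 ∧ Reduced w ∧ w.head? = some y} with hT
    have hprop : ∀ w : List (Letter n), ∀ hl : w.length = k + 1 + 1, Reduced w →
        w.head? = some z →
        (w.tail.head (htl w hl) ≠ linv z ∧ (w.tail.length = k + 1 ∧ Reduced w.tail ∧
          w.tail.head? = some (w.tail.head (htl w hl)))) := by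
      intro w hl hr hh
      have h2 : w.tail = w.tail.head (htl w hl) :: w.tail.tail :=
        (List.cons_head_tail _).symm
      have hs : w = z :: w.tail.head (htl w hl) :: w.tail.tail := by
        conv_lhs => rw [eq_cons_tail hh, h2]
      have hr' : Reduced (z :: w.tail.head (htl w hl) :: w.tail.tail) := hs ▸ hr
      simp only [Reduced, List.Chain', List.isChain_cons_cons] at hr'
      refine ⟨hr'.1, ?_, ?_, ?_⟩
      · rw [List.length_tail, hl]
        omega
      · rw [Reduced, h2]; exact hr'.2
      · exact List.head?_eq_head _
    let f : {w : List (Letter n) // w.length = k + 1 + 1 ∧ Reduced w ∧ w.head? = some z} →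
        Σ y : {y : Letter n // y ≠ linv z}, T y.1 :=
      fun x => ⟨⟨x.1.tail.head (htl x.1 x.2.1), (hprop x.1 x.2.1 x.2.2.1 x.2.2.2).1⟩,
        ⟨x.1.tail, (hprop x.1 x.2.1 x.2.2.1 x.2.2.2).2⟩⟩
    have hfinj : Function.Injective f := by
      rintro ⟨w, hw⟩ ⟨w', hw'⟩ h
      have htails : w.tail = w'.tail := congrArg (fun p => p.2.1) h
      ext1
      show w = w'
      conv_lhs => rw [eq_cons_tail hw.2.2]
      conv_rhs => rw [eq_cons_tail hw'.2.2]
      rw [htails]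
    have h1 := Nat.card_le_card_of_injective f hfinj
    haveI : ∀ y : {y : Letter n // y ≠ linv z}, Fintype (T y.1) := fun y => Fintype.ofFinite _
    have h2 : Nat.card (Σ y : {y : Letter n // y ≠ linv z}, T y.1)
        = ∑ y : {y : Letter n // y ≠ linv z}, Nat.card (T y.1) := by
      simp [Nat.card_eq_fintype_card]
    have h3 : ∑ y : {y : Letter n // y ≠ linv z}, Nat.card (T y.1)
        ≤ ∑ _y : {y : Letter n // y ≠ linv z}, (2 * n - 1) ^ k :=
      Finset.sum_le_sum fun y _ => ih y.1
    have hcy : Fintype.card {y : Letter n // y ≠ linv z} = 2 * n - 1 := by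
      simp [Fintype.card_subtype_compl (· = linv z), Fintype.card_subtype_eq]
      omega
    have h4 : ∑ _y : {y : Letter n // y ≠ linv z}, (2 * n - 1) ^ k
        = (2 * n - 1) * (2 * n - 1) ^ k := by
      rw [Finset.sum_const, smul_eq_mul, Finset.card_univ, hcy]
    calc Nat.card {w : List (Letter n) // w.length = k + 1 + 1 ∧ Reduced w ∧ w.head? = some z}
        ≤ Nat.card (Σ y : {y : Letter n // y ≠ linv z}, T y.1) := h1
      _ = ∑ y : {y : Letter n // y ≠ linv z}, Nat.card (T y.1) := h2
      _ ≤ (2 * n - 1) * (2 * n - 1) ^ k := le_of_le_of_eq h3 h4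
      _ = (2 * n - 1) ^ (k + 1) := by ring

/-- Main counting lemma. -/
lemma count_lower (n B : ℕ) (hn : 1 ≤ n) (hB : 1 ≤ B)
    (Q : Type) [Finite Q]
    (δ : Q → List (Letter n) → Option Q)
    (hdom : ∀ q a, (δ q a).isSome → a ∈ RW n B)
    (lam : ℝ)
    (hgrow : ∀ q : Q,
      lam * ((2 * n * (2 * n - 1) ^ (B - 1) : ℕ) : ℝ) ≤
        (Nat.card {a : List (Letter n) // (δ q a).isSome} : ℝ))
    (hL0 : 0 ≤ lam * ((2 * n * (2 * n - 1) ^ (B - 1) : ℕ) : ℝ)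
        - (((2 * n - 1) ^ (B - 1) : ℕ) : ℝ)) :
    ∀ (m : ℕ) (q : Q) (z : Letter n),
      (lam * ((2 * n * (2 * n - 1) ^ (B - 1) : ℕ) : ℝ)
          - (((2 * n - 1) ^ (B - 1) : ℕ) : ℝ)) ^ m ≤
        (Nat.card {w : List (Letter n) // w.length = B * m ∧ Reduced w ∧ w.head? ≠ some z ∧
          ∃ bs : List (List (Letter n)), (run δ q bs).isSome ∧ bs.flatten = w} : ℝ) := by
  classical
  set Lr : ℝ := lam * ((2 * n * (2 * n - 1) ^ (B - 1) : ℕ) : ℝ)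
      - (((2 * n - 1) ^ (B - 1) : ℕ) : ℝ) with hLr
  intro m
  induction m with
  | zero =>
    intro q z
    haveI hne : Nonempty {w : List (Letter n) // w.length = B * 0 ∧ Reduced w ∧
        w.head? ≠ some z ∧
        ∃ bs : List (List (Letter n)), (run δ q bs).isSome ∧ bs.flatten = w} :=
      ⟨⟨[], by simp, by simp [Reduced, List.Chain'], by simp, ⟨[], by rw [run_nil]; rfl, rfl⟩⟩⟩
    have hpos := Nat.card_pos (α := {w : List (Letter n) // w.length = B * 0 ∧ Reduced w ∧
        w.head? ≠ some z ∧
        ∃ bs : List (List (Letter n)), (run δ q bs).isSome ∧ bs.flatten = w})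
    simp only [pow_zero]
    exact_mod_cast hpos
  | succ m IH =>
    intro q z
    set A := {a : List (Letter n) // (δ q a).isSome ∧ a.head? ≠ some z} with hA
    haveI finA : Finite A :=
      ((List.finite_length_eq _ B).subset fun a ha => (hdom q a ha.1).1).to_subtype
    have hlenA : ∀ a : A, a.1.length = B := fun a => (hdom q a.1 a.2.1).1
    have hnilA : ∀ a : A, a.1 ≠ [] := by
      intro a h
      have := hlenA a
      rw [h] at this
      simp at this
      omega
    have hredA : ∀ a : A, Reduced a.1 := fun a => (hdom q a.1 a.2.1).2
    set T := fun (a : A) =>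
      {w : List (Letter n) // w.length = B * m ∧ Reduced w ∧
        w.head? ≠ some (linv (a.1.getLast (hnilA a))) ∧
        ∃ bs : List (List (Letter n)),
          (run δ ((δ q a.1).get a.2.1) bs).isSome ∧ bs.flatten = w} with hT
    -- the gluing map
    have fprop : ∀ (a : A) (w : T a),
        (a.1 ++ w.1).length = B * (m + 1) ∧ Reduced (a.1 ++ w.1) ∧
        (a.1 ++ w.1).head? ≠ some z ∧
        ∃ bs : List (List (Letter n)), (run δ q bs).isSome ∧ bs.flatten = a.1 ++ w.1 := by
      rintro a ⟨w, hwl, hwr, hwz, bs, hbs1, hbs2⟩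
      refine ⟨?_, ?_, ?_, ?_⟩
      · simp only [List.length_append, hlenA a, hwl]; ring
      · rw [Reduced, List.Chain', List.isChain_append]
        refine ⟨hredA a, hwr, ?_⟩
        intro x hx y hy
        rw [List.getLast?_eq_getLast (hnilA a), Option.mem_def, Option.some.injEq] at hx
        subst hx
        intro hcon
        apply hwz
        rw [Option.mem_def] at hy
        rw [hy, hcon]
      · rw [List.head?_append_of_ne_nil _ (hnilA a)]
        exact a.2.2
      · refine ⟨a.1 :: bs, ?_, by simp [hbs2]⟩
        have hδ : δ q a.1 = some ((δ q a.1).get a.2.1) := (Option.some_get a.2.1).symm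
        rw [run_cons, hδ]
        exact hbs1
    let f : (Σ a : A, T a) → {w : List (Letter n) // w.length = B * (m + 1) ∧ Reduced w ∧
        w.head? ≠ some z ∧
        ∃ bs : List (List (Letter n)), (run δ q bs).isSome ∧ bs.flatten = w} :=
      fun p => ⟨p.1.1 ++ p.2.1, fprop p.1 p.2⟩
    have hfinj : Function.Injective f := by
      rintro ⟨a, w, hw⟩ ⟨a', w', hw'⟩ h
      have h0 : a.1 ++ w = a'.1 ++ w' := congrArg Subtype.val h
      have ea : a.1.length = a'.1.length := by rw [hlenA a, hlenA a']
      have ha : a.1 = a'.1 := by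
        have t1 : (a.1 ++ w).take a.1.length = a.1 := List.take_left ..
        have t2 : (a'.1 ++ w').take a'.1.length = a'.1 := List.take_left ..
        rw [← t1, ← t2, ← ea, h0]
      have hwe : w = w' := by
        have t1 : (a.1 ++ w).drop a.1.length = w := List.drop_left ..
        have t2 : (a'.1 ++ w').drop a'.1.length = w' := List.drop_left ..
        rw [← t1, ← t2, ← ea, h0]
      obtain rfl : a = a' := Subtype.ext ha
      subst hwe
      rfl
    have hcard1 := Nat.card_le_card_of_injective f hfinj
    haveI : ∀ a : A, Fintype (T a) := fun a => Fintype.ofFinite _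
    haveI : Fintype A := Fintype.ofFinite _
    have hcard2 : Nat.card (Σ a : A, T a) = ∑ a : A, Nat.card (T a) := by
      simp [Nat.card_eq_fintype_card]
    -- lower bound on the number of admissible letters
    have hAcard : Lr ≤ (Nat.card A : ℝ) := by
      set Bad := {w : List (Letter n) // w.length = B ∧ Reduced w ∧ w.head? = some z}
        with hBad
      have hbad : Nat.card Bad ≤ (2 * n - 1) ^ (B - 1) := by
        have hb' : B - 1 + 1 = B := by omega
        have h := card_reduced_head_le n (B - 1) z
        rw [hb'] at h
        exact h
      set D := {a : List (Letter n) // (δ q a).isSome} with hD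
      haveI finD : Finite D :=
        ((List.finite_length_eq _ B).subset fun a ha => (hdom q a ha).1).to_subtype
      have hDle : Nat.card D ≤ Nat.card A + Nat.card Bad := by
        have hginj : Function.Injective (fun a : D =>
            if h : a.1.head? = some z then
              (Sum.inr ⟨a.1, (hdom q a.1 a.2).1, (hdom q a.1 a.2).2, h⟩ : A ⊕ Bad)
            else Sum.inl ⟨a.1, a.2, h⟩) := by
          intro x y h
          simp only at h
          apply Subtype.ext
          split_ifs at h with h1 h2 <;>
            simp only [Sum.inr.injEq, Sum.inl.injEq, reduceCtorEq] at h <;>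
            · have h'' := congrArg Subtype.val h
              exact h''
        have h1 := Nat.card_le_card_of_injective _ hginj
        rwa [Nat.card_sum] at h1
      have h3 : (Nat.card D : ℝ) ≤ (Nat.card A : ℝ) + (Nat.card Bad : ℝ) := by
        exact_mod_cast hDle
      have h4 : (Nat.card Bad : ℝ) ≤ (((2 * n - 1) ^ (B - 1) : ℕ) : ℝ) := by
        exact_mod_cast hbad
      have h2 := hgrow q
      rw [hLr]
      have h5 : lam * ((2 * n * (2 * n - 1) ^ (B - 1) : ℕ) : ℝ) ≤ (Nat.card D : ℝ) := h2
      linarith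
    -- put everything together
    have hLrm : (0 : ℝ) ≤ Lr ^ m := pow_nonneg hL0 m
    calc Lr ^ (m + 1) = Lr * Lr ^ m := by ring
      _ ≤ (Nat.card A : ℝ) * Lr ^ m := mul_le_mul_of_nonneg_right hAcard hLrm
      _ = ∑ _a : A, Lr ^ m := by
          rw [Finset.sum_const, nsmul_eq_mul, Nat.card_eq_fintype_card, Finset.card_univ]
      _ ≤ ∑ a : A, (Nat.card (T a) : ℝ) := Finset.sum_le_sum fun a _ => IH _ _
      _ = ((∑ a : A, Nat.card (T a) : ℕ) : ℝ) := by push_cast; rfl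
      _ = ((Nat.card (Σ a : A, T a) : ℕ) : ℝ) := by rw [hcard2]
      _ ≤ _ := by exact_mod_cast hcard1

theorem reduced_language_growth (n B : ℕ) (hn : 1 ≤ n) (hB : 1 ≤ B)
    (Q : Type) [Finite Q] (v0 : Q)
    (δ : Q → List (Letter n) → Option Q)
    (hdom : ∀ q a, (δ q a).isSome → a ∈ RW n B)
    (himm : ∀ u a v, δ u a = some v → δ v (wInv a) = none)
    (lam : ℝ) (hlam1 : 1 / (2 * (n : ℝ)) < lam) (hlam2 : lam ≤ 1)
    (hgrow : ∀ q : Q,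
      lam * ((2 * n * (2 * n - 1) ^ (B - 1) : ℕ) : ℝ) ≤
        (Nat.card {a : List (Letter n) // (δ q a).isSome} : ℝ)) :
    ∃ c : ℝ, 0 < c ∧ ∀ᶠ Lhat : ℕ in atTop,
      c * ((lam - 1 / (2 * (n : ℝ))) ^ ((1 : ℝ) / (B : ℝ)) * (2 * (n : ℝ) - 1)) ^ (B * Lhat) ≤
        (Nat.card {w : List (Letter n) //
          w.length = B * Lhat ∧ Reduced w ∧
          ∃ q : List (List (Letter n)), (run δ v0 q).isSome ∧ q.flatten = w} : ℝ) := by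
  classical
  have hn' : (1 : ℝ) ≤ (n : ℝ) := by exact_mod_cast hn
  have h2n : (0 : ℝ) < 2 * (n : ℝ) := by linarith
  set μ : ℝ := lam - 1 / (2 * (n : ℝ)) with hμdef
  have hμ : 0 < μ := by rw [hμdef]; linarith
  -- cast facts
  have hcast1 : ((2 * n - 1 : ℕ) : ℝ) = 2 * (n : ℝ) - 1 := by
    rw [Nat.cast_sub (by omega)]
    push_cast
    ring
  have hcastN : ((2 * n * (2 * n - 1) ^ (B - 1) : ℕ) : ℝ)
      = 2 * (n : ℝ) * (2 * (n : ℝ) - 1) ^ (B - 1) := by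
    push_cast [hcast1]
    ring
  have hcastM : (((2 * n - 1) ^ (B - 1) : ℕ) : ℝ) = (2 * (n : ℝ) - 1) ^ (B - 1) := by
    push_cast [hcast1]
    ring
  set Lr : ℝ := lam * ((2 * n * (2 * n - 1) ^ (B - 1) : ℕ) : ℝ)
      - (((2 * n - 1) ^ (B - 1) : ℕ) : ℝ) with hLrdef
  have hn1 : (0 : ℝ) ≤ 2 * (n : ℝ) - 1 := by linarith
  have hLrval : Lr = μ * (2 * (n : ℝ)) * (2 * (n : ℝ) - 1) ^ (B - 1) := by
    rw [hLrdef, hcastN, hcastM, hμdef]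
    field_simp
  have hL0 : 0 ≤ Lr := by
    rw [hLrval]
    positivity
  refine ⟨1, one_pos, Eventually.of_forall fun Lhat => ?_⟩
  rw [one_mul]
  set z0 : Letter n := (⟨0, hn⟩, true) with hz0
  have hcount := count_lower n B hn hB Q δ hdom lam hgrow hL0 Lhat v0 z0
  -- inclusion of the counted set into the target set
  set Tgt := {w : List (Letter n) // w.length = B * Lhat ∧ Reduced w ∧
      ∃ q : List (List (Letter n)), (run δ v0 q).isSome ∧ q.flatten = w} with hTgt
  have hsub : Nat.card {w : List (Letter n) // w.length = B * Lhat ∧ Reduced w ∧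
      w.head? ≠ some z0 ∧
      ∃ bs : List (List (Letter n)), (run δ v0 bs).isSome ∧ bs.flatten = w}
      ≤ Nat.card Tgt := by
    apply Nat.card_le_card_of_injective
      (fun w => (⟨w.1, w.2.1, w.2.2.1, w.2.2.2.2⟩ : Tgt))
    intro x y h
    have h' := congrArg Subtype.val h
    exact Subtype.ext h'
  have hmain : Lr ^ Lhat ≤ (Nat.card Tgt : ℝ) := by
    calc Lr ^ Lhat ≤ _ := hcount
      _ ≤ (Nat.card Tgt : ℝ) := by exact_mod_cast hsub
  -- algebra: the target quantity is at most Lr ^ Lhat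
  have hB0 : (B : ℝ) ≠ 0 := by
    have h0 : 0 < B := hB
    positivity
  have e1 : (μ ^ ((1 : ℝ) / (B : ℝ))) ^ (B * Lhat) = μ ^ Lhat := by
    rw [← Real.rpow_natCast (μ ^ ((1 : ℝ) / (B : ℝ))) (B * Lhat), ← Real.rpow_mul hμ.le]
    have harg : (1 : ℝ) / (B : ℝ) * ((B * Lhat : ℕ) : ℝ) = ((Lhat : ℕ) : ℝ) := by
      push_cast
      field_simp
    rw [harg]
    exact Real.rpow_natCast μ Lhat
  have e2 : (μ ^ ((1 : ℝ) / (B : ℝ)) * (2 * (n : ℝ) - 1)) ^ (B * Lhat)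
      = μ ^ Lhat * (2 * (n : ℝ) - 1) ^ (B * Lhat) := by
    rw [mul_pow, e1]
  have hbase : (2 * (n : ℝ) - 1) ^ B ≤ 2 * (n : ℝ) * (2 * (n : ℝ) - 1) ^ (B - 1) := by
    conv_lhs => rw [show B = B - 1 + 1 from by omega]
    rw [pow_succ]
    have h1 : (0 : ℝ) ≤ (2 * (n : ℝ) - 1) ^ (B - 1) := by positivity
    nlinarith
  have e3 : (2 * (n : ℝ) - 1) ^ (B * Lhat)
      ≤ (2 * (n : ℝ) * (2 * (n : ℝ) - 1) ^ (B - 1)) ^ Lhat := by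
    rw [pow_mul]
    exact pow_le_pow_left₀ (by positivity) hbase Lhat
  have e4 : (μ ^ ((1 : ℝ) / (B : ℝ)) * (2 * (n : ℝ) - 1)) ^ (B * Lhat) ≤ Lr ^ Lhat := by
    rw [e2, hLrval, mul_assoc, mul_pow]
    exact mul_le_mul_of_nonneg_left e3 (by positivity)
  calc (μ ^ ((1 : ℝ) / (B : ℝ)) * (2 * (n : ℝ) - 1)) ^ (B * Lhat)
      ≤ Lr ^ Lhat := e4
    _ ≤ (Nat.card Tgt : ℝ) := hmain
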